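/- Let s > 2 and λ > 0 with cosh λ = s/2. Then for every i ∈ {1,…,ℓ}, U_{ℓ−i}(s/2)/U_ℓ(s/2) + U_{i−1}(s/2)/U_ℓ(s/2) ≤ cosh((½(ℓ+1) − i)λ)/cosh(½(ℓ+1)λ), where U_n is the Chebyshev polynomial of the second kind. -/

import Mathlib

open Polynomial

lemma U_eval_cosh (lam : ℝ) (n : ℤ) :
    (Polynomial.Chebyshev.U ℝ n).eval (Real.cosh lam) * Real.sinh lam
      = Real.sinh (((n : ℝ) + 1) * lam) := by
  have h := Polynomial.Chebyshev.U_complex_cos ((lam : ℂ) * Complex.I) n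
  rw [Complex.cos_mul_I, Complex.sin_mul_I,
    show ((n : ℂ) + 1) * ((lam : ℂ) * Complex.I) = ((((n : ℝ) + 1) * lam : ℝ) : ℂ) * Complex.I by
      push_cast; ring,
    Complex.sin_mul_I] at h
  have he : (Polynomial.Chebyshev.U ℂ n).eval (Complex.cosh (lam : ℂ)) =
      (((Polynomial.Chebyshev.U ℝ n).eval (Real.cosh lam) : ℝ) : ℂ) := by
    rw [← Complex.ofReal_cosh, ← Polynomial.Chebyshev.map_U (algebraMap ℝ ℂ),
      Polynomial.eval_map]
    show Polynomial.eval₂ (algebraMap ℝ ℂ) ((algebraMap ℝ ℂ) (Real.cosh lam)) _ = _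
    rw [Polynomial.eval₂_at_apply]
    rfl
  rw [he, ← Complex.ofReal_sinh, ← Complex.ofReal_sinh] at h
  rw [← mul_assoc] at h
  have h3 := mul_right_cancel₀ Complex.I_ne_zero h
  exact_mod_cast h3

/-- For `cosh λ = s/2`, `λ > 0`, and `i ∈ {1,…,ℓ}`:
`U_{ℓ−i}(s/2)/U_ℓ(s/2) + U_{i−1}(s/2)/U_ℓ(s/2) ≤ cosh((½(ℓ+1)−i)λ)/cosh(½(ℓ+1)λ)`. -/
theorem chebyshev_boundary_coefficient_bound (s lam : ℝ) (hs : 2 < s) (hlam : 0 < lam)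
    (hcosh : Real.cosh lam = s / 2) (ℓ : ℤ) (hℓ : 1 ≤ ℓ) :
    ∀ i ∈ Finset.Icc 1 ℓ,
      (Polynomial.Chebyshev.U ℝ (ℓ - i)).eval (s / 2) /
          (Polynomial.Chebyshev.U ℝ ℓ).eval (s / 2) +
        (Polynomial.Chebyshev.U ℝ (i - 1)).eval (s / 2) /
          (Polynomial.Chebyshev.U ℝ ℓ).eval (s / 2) ≤
      Real.cosh ((((ℓ : ℝ) + 1) / 2 - (i : ℝ)) * lam) /
        Real.cosh ((((ℓ : ℝ) + 1) / 2) * lam) := by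
  intro i hi
  obtain ⟨hi1, hi2⟩ := Finset.mem_Icc.mp hi
  have hsl : 0 < Real.sinh lam := Real.sinh_pos_iff.mpr hlam
  set c : ℝ := (((ℓ : ℝ) + 1) / 2) * lam with hc
  set d : ℝ := ((((ℓ : ℝ) + 1) / 2) - (i : ℝ)) * lam with hd
  have hc0 : 0 < c := by
    have : (1 : ℝ) ≤ (ℓ : ℝ) := by exact_mod_cast hℓ
    have : 0 < ((ℓ : ℝ) + 1) / 2 := by linarith
    positivity
  have hsc : 0 < Real.sinh c := Real.sinh_pos_iff.mpr hc0
  have hcc : 0 < Real.cosh c := Real.cosh_pos c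
  have hcd : 0 < Real.cosh d := Real.cosh_pos d
  have e1 : (Polynomial.Chebyshev.U ℝ (ℓ - i)).eval (s / 2) * Real.sinh lam
      = Real.sinh (c + d) := by
    rw [← hcosh, U_eval_cosh]
    congr 1
    rw [hc, hd]; push_cast; ring
  have e2 : (Polynomial.Chebyshev.U ℝ (i - 1)).eval (s / 2) * Real.sinh lam
      = Real.sinh (c - d) := by
    rw [← hcosh, U_eval_cosh]
    congr 1
    rw [hc, hd]; push_cast; ring
  have e3 : (Polynomial.Chebyshev.U ℝ ℓ).eval (s / 2) * Real.sinh lam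
      = Real.sinh (c + c) := by
    rw [← hcosh, U_eval_cosh]
    congr 1
    rw [hc]; push_cast; ring
  have k1 : Real.sinh (c + d) + Real.sinh (c - d) = 2 * Real.sinh c * Real.cosh d := by
    rw [Real.sinh_add, Real.sinh_sub]; ring
  have k2 : Real.sinh (c + c) = 2 * Real.sinh c * Real.cosh c := by
    rw [Real.sinh_add]; ring
  have hU3 : (Polynomial.Chebyshev.U ℝ ℓ).eval (s / 2)
      = 2 * Real.sinh c * Real.cosh c / Real.sinh lam := by
    rw [← k2, ← e3, mul_div_assoc, div_self hsl.ne', mul_one]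
  have hU1 : (Polynomial.Chebyshev.U ℝ (ℓ - i)).eval (s / 2)
      = Real.sinh (c + d) / Real.sinh lam := by
    field_simp at e1 ⊢; linarith
  have hU2 : (Polynomial.Chebyshev.U ℝ (i - 1)).eval (s / 2)
      = Real.sinh (c - d) / Real.sinh lam := by
    field_simp at e2 ⊢; linarith
  apply le_of_eq
  rw [hU1, hU2, hU3]
  have h2sc : (2 : ℝ) * Real.sinh c * Real.cosh c ≠ 0 := by positivity
  field_simp
  linear_combination k1
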